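/- Assume n ≥ 2, u* ∈ K_{n+1}, and H ∩ int K_{n+1} = ∅. Then H ∩ bd K_{n+1} = {u*} if and only if Bᵀ û* = 0 and 2‖b‖² < 1. -/

import Mathlib

/-- Euclidean norm of the tail `x₁` of `x = (x₀; x₁) ∈ ℝ × ℝⁿ`. -/
noncomputable def tailNorm {n : ℕ} (x : EuclideanSpace ℝ (Fin (n + 1))) : ℝ :=
  Real.sqrt (∑ i : Fin n, x i.succ ^ 2)

/-- The second-order cone `K_{n+1} = {(x₀; x₁) : ‖x₁‖ ≤ x₀}`. -/
def soc (n : ℕ) : Set (EuclideanSpace ℝ (Fin (n + 1))) :=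
  {x | tailNorm x ≤ x 0}

/-- The boundary of the second-order cone: `{(x₀; x₁) : ‖x₁‖ = x₀}`. -/
def socBd (n : ℕ) : Set (EuclideanSpace ℝ (Fin (n + 1))) :=
  {x | tailNorm x = x 0}

/-- The interior of the second-order cone: `{(x₀; x₁) : ‖x₁‖ < x₀}`. -/
def socInt (n : ℕ) : Set (EuclideanSpace ℝ (Fin (n + 1))) :=
  {x | tailNorm x < x 0}

/-- `x̂ = (x₀; −x₁)` for `x = (x₀; x₁)`. -/
def socHat {n : ℕ} (x : EuclideanSpace ℝ (Fin (n + 1))) : EuclideanSpace ℝ (Fin (n + 1)) :=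
  WithLp.toLp 2 (fun i => if i = 0 then x 0 else -(x i))

/-- `B t` viewed as an element of Euclidean space. -/
def mvE {m p : ℕ} (B : Matrix (Fin m) (Fin p) ℝ) (t : Fin p → ℝ) : EuclideanSpace ℝ (Fin m) :=
  WithLp.toLp 2 (fun i => B.mulVec t i)

/-- A Euclidean vector viewed as a plain function. -/
def toFun {m : ℕ} (x : EuclideanSpace ℝ (Fin m)) : Fin m → ℝ := x

open Matrix Finset

lemma tail_nonneg {n : ℕ} (x : EuclideanSpace ℝ (Fin (n+1))) :
    (0:ℝ) ≤ ∑ i : Fin n, x i.succ ^ 2 :=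
  Finset.sum_nonneg fun _ _ => sq_nonneg _

lemma mem_soc_iff {n : ℕ} (x : EuclideanSpace ℝ (Fin (n+1))) :
    x ∈ soc n ↔ 0 ≤ x 0 ∧ (∑ i : Fin n, x i.succ ^ 2) ≤ x 0 ^ 2 := by
  constructor
  · intro h
    have h' : Real.sqrt (∑ i : Fin n, x i.succ ^ 2) ≤ x 0 := h
    have h0 : 0 ≤ x 0 := le_trans (Real.sqrt_nonneg _) h'
    refine ⟨h0, ?_⟩
    nlinarith [Real.sq_sqrt (tail_nonneg x), Real.sqrt_nonneg (∑ i : Fin n, x i.succ ^ 2)]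
  · rintro ⟨h0, h⟩
    show Real.sqrt _ ≤ x 0
    calc Real.sqrt (∑ i : Fin n, x i.succ ^2) ≤ Real.sqrt (x 0 ^2) := Real.sqrt_le_sqrt h
    _ = x 0 := Real.sqrt_sq h0

lemma mem_socInt_iff {n : ℕ} (x : EuclideanSpace ℝ (Fin (n+1))) :
    x ∈ socInt n ↔ 0 < x 0 ∧ (∑ i : Fin n, x i.succ ^ 2) < x 0 ^ 2 := by
  constructor
  · intro h
    have h' : Real.sqrt (∑ i : Fin n, x i.succ ^ 2) < x 0 := h
    have h0 : 0 < x 0 := lt_of_le_of_lt (Real.sqrt_nonneg _) h'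
    refine ⟨h0, ?_⟩
    nlinarith [Real.sq_sqrt (tail_nonneg x), Real.sqrt_nonneg (∑ i : Fin n, x i.succ ^ 2)]
  · rintro ⟨h0, h⟩
    show Real.sqrt _ < x 0
    calc Real.sqrt (∑ i : Fin n, x i.succ ^2) < Real.sqrt (x 0 ^2) :=
          Real.sqrt_lt_sqrt (tail_nonneg x) h
    _ = x 0 := Real.sqrt_sq h0.le

lemma sum_sq_mulVec {n p : ℕ} (B : Matrix (Fin (n+1)) (Fin p) ℝ) (hB : B.transpose * B = 1)
    (t : Fin p → ℝ) :
    ∑ i : Fin (n+1), (B.mulVec t i)^2 = ∑ j, t j ^ 2 := by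
  have h2 : (B.mulVec t) ⬝ᵥ (B.mulVec t) = t ⬝ᵥ t := by
    rw [dotProduct_mulVec, ← mulVec_transpose, mulVec_mulVec, hB, one_mulVec]
  simpa [dotProduct, sq] using h2

lemma hat_dot {n p : ℕ} (B : Matrix (Fin (n+1)) (Fin p) ℝ)
    (u : EuclideanSpace ℝ (Fin (n+1))) (t : Fin p → ℝ) :
    ∑ i : Fin (n+1), (socHat u) i * (B.mulVec t i)
      = (B.transpose.mulVec (toFun (socHat u))) ⬝ᵥ t := by
  have : (toFun (socHat u)) ⬝ᵥ (B.mulVec t) = (B.transpose.mulVec (toFun (socHat u))) ⬝ᵥ t := by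
    rw [dotProduct_mulVec, ← mulVec_transpose]
  simpa [dotProduct, toFun] using this

lemma char {n p : ℕ} (B : Matrix (Fin (n+1)) (Fin p) ℝ) (hB : B.transpose * B = 1)
    (u : EuclideanSpace ℝ (Fin (n+1))) (hbd : tailNorm u = u 0) (t : Fin p → ℝ) :
    (u + mvE B t ∈ soc n ↔ 0 ≤ u 0 + B.mulVec t 0 ∧
        (∑ j, t j ^ 2) ≤ 2 * (B.mulVec t 0)^2
          + 2 * ((B.transpose.mulVec (toFun (socHat u))) ⬝ᵥ t)) ∧
    (u + mvE B t ∈ socInt n ↔ 0 < u 0 + B.mulVec t 0 ∧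
        (∑ j, t j ^ 2) < 2 * (B.mulVec t 0)^2
          + 2 * ((B.transpose.mulVec (toFun (socHat u))) ⬝ᵥ t)) := by
  have happ : ∀ i, (u + mvE B t) i = u i + B.mulVec t i := fun i => by simp [mvE]
  have hu0 : 0 ≤ u 0 := hbd ▸ Real.sqrt_nonneg _
  have hSu : ∑ i : Fin n, u i.succ ^ 2 = u 0 ^ 2 := by
    rw [← hbd]; exact (Real.sq_sqrt (tail_nonneg u)).symm
  have hsplitA : ∑ j, t j ^ 2 = (B.mulVec t 0)^2 + ∑ i : Fin n, (B.mulVec t i.succ)^2 := by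
    rw [← sum_sq_mulVec B hB t, Fin.sum_univ_succ]
  have hγ : (B.transpose.mulVec (toFun (socHat u))) ⬝ᵥ t
      = u 0 * B.mulVec t 0 - ∑ i : Fin n, u i.succ * B.mulVec t i.succ := by
    rw [← hat_dot, Fin.sum_univ_succ]
    simp [socHat, Fin.succ_ne_zero, neg_mul, Finset.sum_neg_distrib, sub_eq_add_neg]
  have hexp : ∑ i : Fin n, (u i.succ + B.mulVec t i.succ)^2
      = (∑ i : Fin n, u i.succ ^2) + 2 * (∑ i : Fin n, u i.succ * B.mulVec t i.succ)
        + ∑ i : Fin n, (B.mulVec t i.succ)^2 := by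
    rw [Finset.mul_sum, ← Finset.sum_add_distrib, ← Finset.sum_add_distrib]
    exact Finset.sum_congr rfl fun i _ => by ring
  have hsq : (u 0 + B.mulVec t 0)^2 = u 0 ^2 + 2 * (u 0 * B.mulVec t 0) + (B.mulVec t 0)^2 := by
    ring
  constructor
  · rw [mem_soc_iff]
    simp only [happ]
    constructor
    · rintro ⟨h1, h2⟩; exact ⟨h1, by rw [hexp] at h2; linarith⟩
    · rintro ⟨h1, h2⟩; exact ⟨h1, by rw [hexp]; linarith⟩
  · rw [mem_socInt_iff]
    simp only [happ]
    constructor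
    · rintro ⟨h1, h2⟩; exact ⟨h1, by rw [hexp] at h2; linarith⟩
    · rintro ⟨h1, h2⟩; exact ⟨h1, by rw [hexp]; linarith⟩

/-- Assume `n ≥ 2`, `u* ∈ K_{n+1}`, and `H ∩ int K_{n+1} = ∅`, where
`H = {u* + B t : t ∈ ℝ^p}` and `B` has orthonormal columns with first row `bᵀ`. Then
`H ∩ bd K_{n+1} = {u*}` if and only if `Bᵀ û* = 0` and `2‖b‖² < 1`. -/
theorem stmt1 (n p : ℕ) (hn : 2 ≤ n)
    (B : Matrix (Fin (n + 1)) (Fin p) ℝ) (hB : B.transpose * B = 1)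
    (ustar : EuclideanSpace ℝ (Fin (n + 1))) (hustar : ustar ∈ soc n)
    (H : Set (EuclideanSpace ℝ (Fin (n + 1))))
    (hH : H = {u | ∃ t : Fin p → ℝ, u = ustar + mvE B t})
    (hdisj : H ∩ socInt n = ∅) :
    H ∩ socBd n = {ustar} ↔
      (B.transpose.mulVec (toFun (socHat ustar)) = 0 ∧ 2 * ∑ j, B 0 j ^ 2 < 1) := by
  have hnotint : ∀ x ∈ H, x ∉ socInt n := by
    intro x hx hxint
    have hmem : x ∈ H ∩ socInt n := ⟨hx, hxint⟩
    rw [hdisj] at hmem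
    exact hmem
  have hmv0 : mvE B (0 : Fin p → ℝ) = 0 := by
    ext i; simp [mvE]
  have hmem0 : ustar ∈ H := by
    rw [hH]; exact ⟨0, by rw [hmv0, add_zero]⟩
  have hbd : tailNorm ustar = ustar 0 :=
    le_antisymm hustar (not_lt.1 (hnotint _ hmem0))
  have hu0 : 0 ≤ ustar 0 := hbd ▸ Real.sqrt_nonneg _
  have hchar := char B hB ustar hbd
  have hNb0 : (0:ℝ) ≤ ∑ j, B 0 j ^ 2 := Finset.sum_nonneg fun _ _ => sq_nonneg _
  have hβ : ∀ t : Fin p → ℝ, B.mulVec t 0 = ∑ j, B 0 j * t j := fun t => rfl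
  have hCS : ∀ t : Fin p → ℝ, (B.mulVec t 0)^2 ≤ (∑ j, B 0 j ^ 2) * ∑ j, t j ^ 2 := by
    intro t
    rw [hβ]
    exact Finset.sum_mul_sq_le_sq_mul_sq Finset.univ _ _
  have hA0 : ∀ t : Fin p → ℝ, (0:ℝ) ≤ ∑ j, t j ^ 2 :=
    fun t => Finset.sum_nonneg fun _ _ => sq_nonneg _
  constructor
  · intro hset
    have hc : B.transpose.mulVec (toFun (socHat ustar)) = 0 := by
      by_contra hc
      have hu0' : 0 < ustar 0 := by
        rcases hu0.lt_or_eq with h | h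
        · exact h
        · exfalso
          apply hc
          have hSu : ∑ i : Fin n, ustar i.succ ^ 2 = ustar 0 ^ 2 := by
            rw [← hbd]; exact (Real.sq_sqrt (tail_nonneg ustar)).symm
          rw [← h] at hSu
          have hz : ∀ i ∈ Finset.univ, ustar (Fin.succ i) ^ 2 = 0 := by
            rw [← Finset.sum_eq_zero_iff_of_nonneg fun i _ => sq_nonneg _]
            simpa using hSu
          have hhat : toFun (socHat ustar) = (0 : Fin (n+1) → ℝ) := by
            funext i
            refine Fin.cases ?_ ?_ i
            · simp [toFun, socHat, ← h]
            · intro j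
              have := hz j (Finset.mem_univ j)
              have hj0 : ustar (Fin.succ j) = 0 := by
                exact pow_eq_zero_iff two_ne_zero |>.1 this
              simp [toFun, socHat, Fin.succ_ne_zero, hj0]
          rw [hhat, Matrix.mulVec_zero]
      set C := B.transpose.mulVec (toFun (socHat ustar)) with hC
      have hK1 : 0 < ∑ j, C j ^ 2 := by
        have hex : ∃ j, C j ≠ 0 := by
          by_contra hall
          push_neg at hall
          exact hc (funext hall)
        obtain ⟨j, hj⟩ := hex
        refine Finset.sum_pos' (fun i _ => sq_nonneg _) ⟨j, Finset.mem_univ j, ?_⟩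
        positivity
      set K3 := ∑ j, B 0 j * C j with hK3
      set ε := min 1 (ustar 0 / (2 * (|K3| + 1))) with hε
      have hεpos : 0 < ε := lt_min one_pos (by positivity)
      have hε1 : ε ≤ 1 := min_le_left _ _
      have hε2 : ε * (2 * (|K3| + 1)) ≤ ustar 0 := by
        have h := min_le_right 1 (ustar 0 / (2 * (|K3| + 1)))
        have hpos : (0:ℝ) < 2 * (|K3| + 1) := by positivity
        calc ε * (2 * (|K3| + 1)) ≤ (ustar 0 / (2 * (|K3| + 1))) * (2 * (|K3| + 1)) := by
              exact mul_le_mul_of_nonneg_right h hpos.le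
        _ = ustar 0 := by field_simp
      set t := fun j => ε * C j with ht
      have hβt : B.mulVec t 0 = ε * K3 := by
        rw [hβ, hK3, Finset.mul_sum]
        exact Finset.sum_congr rfl fun j _ => by rw [ht]; ring
      have hγt : C ⬝ᵥ t = ε * ∑ j, C j ^ 2 := by
        simp only [dotProduct, ht, Finset.mul_sum]
        exact Finset.sum_congr rfl fun j _ => by ring
      have hAt : ∑ j, t j ^ 2 = ε^2 * ∑ j, C j ^ 2 := by
        simp only [ht, Finset.mul_sum]
        exact Finset.sum_congr rfl fun j _ => by ring
      have hmemH : ustar + mvE B t ∈ H := by rw [hH]; exact ⟨t, rfl⟩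
      apply hnotint _ hmemH
      rw [(hchar t).2]
      constructor
      · have hmm : ε * (-|K3|) ≤ ε * K3 := mul_le_mul_of_nonneg_left (neg_abs_le K3) hεpos.le
        nlinarith [abs_nonneg K3]
      · rw [hβt, hγt, hAt]
        nlinarith [mul_pos hεpos hK1, mul_nonneg (mul_nonneg (sub_nonneg.2 hε1) hεpos.le) hK1.le,
          mul_nonneg (sq_nonneg ε) (sq_nonneg K3)]
    refine ⟨hc, ?_⟩
    by_contra h1
    push_neg at h1
    set t := fun j => B 0 j with ht
    have hβt : B.mulVec t 0 = ∑ j, B 0 j ^ 2 := by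
      rw [hβ]; exact Finset.sum_congr rfl fun j _ => by rw [ht]; ring
    have hγt : (B.transpose.mulVec (toFun (socHat ustar))) ⬝ᵥ t = 0 := by
      rw [hc]; exact zero_dotProduct _
    have hAt : ∑ j, t j ^ 2 = ∑ j, B 0 j ^ 2 := rfl
    have hmemH : ustar + mvE B t ∈ H := by rw [hH]; exact ⟨t, rfl⟩
    have hmemK : ustar + mvE B t ∈ soc n := by
      rw [(hchar t).1, hβt, hγt, hAt]
      constructor
      · linarith
      · nlinarith
    have hmembd : ustar + mvE B t ∈ socBd n :=
      le_antisymm hmemK (not_lt.1 (hnotint _ hmemH))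
    have hxeq : ustar + mvE B t = ustar := by
      have : ustar + mvE B t ∈ ({ustar} : Set (EuclideanSpace ℝ (Fin (n+1)))) := by
        rw [← hset]; exact ⟨hmemH, hmembd⟩
      exact this
    have hv0 : ∀ i, B.mulVec t i = 0 := by
      intro i
      have h' : (ustar + mvE B t) i = ustar i := by rw [hxeq]
      have h'' : (ustar + mvE B t) i = ustar i + B.mulVec t i := by simp [mvE]
      linarith [h''.symm.trans h']
    have : ∑ j, t j ^ 2 = 0 := by
      rw [← sum_sq_mulVec B hB t]
      exact Finset.sum_eq_zero fun i _ => by rw [hv0 i]; ring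
    rw [hAt] at this
    linarith
  · rintro ⟨hc, hlt⟩
    refine Set.eq_singleton_iff_unique_mem.mpr ⟨⟨hmem0, hbd⟩, ?_⟩
    rintro x ⟨hxH, hxbd⟩
    rw [hH] at hxH
    obtain ⟨t, rfl⟩ := hxH
    have hxK : ustar + mvE B t ∈ soc n := le_of_eq hxbd
    obtain ⟨h1, h2⟩ := (hchar t).1.mp hxK
    rw [hc, zero_dotProduct] at h2
    have hA : ∑ j, t j ^ 2 = 0 := by
      refine le_antisymm ?_ (hA0 t)
      nlinarith [hCS t, hA0 t]
    have hv0 : ∀ i, B.mulVec t i = 0 := by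
      have hs : ∑ i : Fin (n+1), (B.mulVec t i)^2 = 0 := by
        rw [sum_sq_mulVec B hB t]; exact hA
      intro i
      have := (Finset.sum_eq_zero_iff_of_nonneg fun i _ => sq_nonneg (B.mulVec t i)).1 hs i
        (Finset.mem_univ i)
      exact pow_eq_zero_iff two_ne_zero |>.1 this
    have : mvE B t = 0 := by ext i; simp [mvE, hv0 i]
    rw [this, add_zero]
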